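/- arXiv:2208.01133 — 3 statements merged into one kernel-verified Lean document; each statement's English description precedes it below -/
import Mathlib

section
/- Let f : X → Z be a group homomorphism with ker f ⊆ Z(X), let B be a group, and let φ, ψ : B → Aut(X) be two actions of B on X such that f(φ(b)(x)) = f(ψ(b)(x)) for all b ∈ B and x ∈ X. Then φ(b) and ψ(b) agree on the commutator subgroup [X,X] for every b ∈ B. -/
open scoped commutatorElement

lemma comm_mul_center_left {X : Type*} [Group X] {z : X}
    (hz : z ∈ Subgroup.center X) (a c : X) : ⁅a * z, c⁆ = ⁅a, c⁆ := by
  have hz' := Subgroup.mem_center_iff.mp hz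
  simp only [commutatorElement_def, mul_inv_rev]
  calc a * z * c * (z⁻¹ * a⁻¹) * c⁻¹
      = a * (z * c * z⁻¹) * a⁻¹ * c⁻¹ := by group
    _ = a * c * a⁻¹ * c⁻¹ := by rw [← hz' c]; group

lemma comm_mul_center_right {X : Type*} [Group X] {z : X}
    (hz : z ∈ Subgroup.center X) (a c : X) : ⁅a, c * z⁆ = ⁅a, c⁆ := by
  have hz' := Subgroup.mem_center_iff.mp hz
  simp only [commutatorElement_def, mul_inv_rev]
  calc a * (c * z) * a⁻¹ * (z⁻¹ * c⁻¹)
      = a * c * (z * a⁻¹ * z⁻¹) * c⁻¹ := by group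
    _ = a * c * a⁻¹ * c⁻¹ := by rw [← hz' a⁻¹]; group

/-- Two B-actions on X agreeing after composing with a map f with central kernel
agree on the commutator subgroup of X. -/
theorem actions_agree_on_commutator {X Z B : Type*} [Group X] [Group Z] [Group B]
    (f : X →* Z) (hker : f.ker ≤ Subgroup.center X)
    (φ ψ : B →* MulAut X)
    (h : ∀ (b : B) (x : X), f (φ b x) = f (ψ b x)) :
    ∀ (b : B), ∀ w ∈ commutator X, φ b w = ψ b w := by
  intro b w hw
  have cen : ∀ x : X, (ψ b x)⁻¹ * φ b x ∈ Subgroup.center X := by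
    intro x
    apply hker
    rw [MonoidHom.mem_ker, map_mul, map_inv, h b x, inv_mul_cancel]
  have key : ∀ x y : X, φ b ⁅x, y⁆ = ψ b ⁅x, y⁆ := by
    intro x y
    have hx : φ b x = ψ b x * ((ψ b x)⁻¹ * φ b x) := by group
    have hy : φ b y = ψ b y * ((ψ b y)⁻¹ * φ b y) := by group
    rw [map_commutatorElement, map_commutatorElement, hx, hy,
      comm_mul_center_left (cen x), comm_mul_center_right (cen y)]
  rw [commutator_eq_closure] at hw
  induction hw using Subgroup.closure_induction with
  | mem x hx => obtain ⟨a, c, rfl⟩ := hx; exact key a c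
  | one => simp
  | mul x y _ _ hx hy => rw [map_mul, map_mul, hx, hy]
  | inv x _ hx => rw [map_inv, map_inv, hx]
end

section
/- If X is a perfect group, then the center of Aut(X) is trivial. -/
open scoped commutatorElement in
/-- If X is a perfect group then the center of Aut(X) is trivial. -/
theorem center_mulAut_eq_bot_of_perfect {X : Type*} [Group X]
    (hX : commutator X = ⊤) :
    Subgroup.center (MulAut X) = ⊥ := by
  rw [Subgroup.eq_bot_iff_forall]
  intro f hf
  have key : ∀ g x : X, (g⁻¹ * f g) * x = x * (g⁻¹ * f g) := by
    intro g x
    have h := Subgroup.mem_center_iff.mp hf (MulAut.conj g)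
    have h2 := congrArg (fun e : MulAut X => e (f⁻¹ x)) h
    simp only [MulAut.mul_apply, MulAut.conj_apply, MulEquiv.apply_symm_apply] at h2
    -- h2 should give : f g * x * (f g)⁻¹ = g * x * g⁻¹ (some direction)
    have h3 : f g * x * (f g)⁻¹ = g * x * g⁻¹ := by
      simpa [MulAut.conj_apply] using h2.symm
    calc (g⁻¹ * f g) * x = g⁻¹ * (f g * x * (f g)⁻¹) * f g := by group
      _ = g⁻¹ * (g * x * g⁻¹) * f g := by rw [h3]
      _ = x * (g⁻¹ * f g) := by group
  have fix : ∀ a b : X, f ⁅a, b⁆ = ⁅a, b⁆ := by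
    intro a b
    set z := a⁻¹ * f a with hzdef
    set w := b⁻¹ * f b with hwdef
    have hz := key a
    have hw := key b
    rw [← hzdef] at hz
    rw [← hwdef] at hw
    have hz2 : ∀ x y : X, z * (x * y) = x * (z * y) := fun x y => by
      rw [← mul_assoc, hz x, mul_assoc]
    have hw2 : ∀ x y : X, w * (x * y) = x * (w * y) := fun x y => by
      rw [← mul_assoc, hw x, mul_assoc]
    have ha : f a = a * z := by rw [hzdef]; group
    have hb : f b = b * w := by rw [hwdef]; group
    have : f ⁅a, b⁆ = ⁅f a, f b⁆ := map_commutatorElement (f : X →* X) a b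
    rw [this, ha, hb]
    simp only [commutatorElement_def, mul_inv_rev, mul_assoc]
    rw [hz2 b, hz2 w, mul_inv_cancel_left, hw2 a⁻¹, mul_inv_cancel_left]
  have hS : commutator X ≤ MonoidHom.eqLocus (f : X →* X) (MonoidHom.id X) := by
    rw [commutator_eq_closure, Subgroup.closure_le]
    rintro _ ⟨a, b, rfl⟩
    exact fix a b
  rw [hX, top_le_iff] at hS
  ext x
  have : x ∈ MonoidHom.eqLocus (f : X →* X) (MonoidHom.id X) := hS ▸ Subgroup.mem_top x
  exact this
end

section
/- Let f : X → Z be a surjective group homomorphism with ker f ⊆ Z(X), and suppose a group B acts on X and on Z such that f is B-equivariant for two (possibly different) actions φ, ψ of B on X mapping to the same action of B on Z. Then for every b ∈ B and every element w of the commutator subgroup [X,X], φ(b)(w) = ψ(b)(w). -/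
open scoped commutatorElement

private lemma comm_central {G : Type*} [Group G] (a c b d : G)
    (hc : ∀ g, g * c = c * g) (hd : ∀ g, g * d = d * g) :
    ⁅a * c, b * d⁆ = ⁅a, b⁆ := by
  simp only [commutatorElement_def, mul_inv_rev]
  calc a * c * (b * d) * (c⁻¹ * a⁻¹) * (d⁻¹ * b⁻¹)
      = a * b * (c * d * c⁻¹ * d⁻¹) * a⁻¹ * b⁻¹ := by
        have h1 : c * b = b * c := (hc b).symm
        have h2 : ∀ g : G, g * d⁻¹ = d⁻¹ * g := fun g => (Commute.inv_right (hd g))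
        have h3 : ∀ g : G, g * c⁻¹ = c⁻¹ * g := fun g => (Commute.inv_right (hc g))
        calc a * c * (b * d) * (c⁻¹ * a⁻¹) * (d⁻¹ * b⁻¹)
            = a * (c * b) * d * c⁻¹ * a⁻¹ * d⁻¹ * b⁻¹ := by group
          _ = a * (b * c) * d * c⁻¹ * a⁻¹ * d⁻¹ * b⁻¹ := by rw [h1]
          _ = a * b * (c * d * c⁻¹) * (a⁻¹ * d⁻¹) * b⁻¹ := by group
          _ = a * b * (c * d * c⁻¹) * (d⁻¹ * a⁻¹) * b⁻¹ := by rw [h2 a⁻¹]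
          _ = a * b * (c * d * c⁻¹ * d⁻¹) * a⁻¹ * b⁻¹ := by group
  _ = a * b * a⁻¹ * b⁻¹ := by
        have : c * d * c⁻¹ * d⁻¹ = 1 := by
          rw [hd c]; group
        rw [this, mul_one]

/-- Two B-actions on X lifting the same action on Z along a surjective central
extension f agree on the commutator subgroup of X. -/
theorem lifted_actions_agree_on_commutator {X Z B : Type*} [Group X] [Group Z] [Group B]
    (f : X →* Z) (hf : Function.Surjective f) (hker : f.ker ≤ Subgroup.center X)
    (φ ψ : B →* MulAut X) (ζ : B →* MulAut Z)
    (hφ : ∀ (b : B) (x : X), f (φ b x) = ζ b (f x))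
    (hψ : ∀ (b : B) (x : X), f (ψ b x) = ζ b (f x)) :
    ∀ (b : B), ∀ w ∈ commutator X, φ b w = ψ b w := by
  intro b
  have key : ∀ x : X, (ψ b x)⁻¹ * φ b x ∈ Subgroup.center X := by
    intro x
    apply hker
    simp [MonoidHom.mem_ker, hφ, hψ]
  have hgen : ∀ x y : X, (φ b).toMonoidHom ⁅x, y⁆ = (ψ b).toMonoidHom ⁅x, y⁆ := by
    intro x y
    have hx := Subgroup.mem_center_iff.mp (key x)
    have hy := Subgroup.mem_center_iff.mp (key y)
    have ex : φ b x = ψ b x * ((ψ b x)⁻¹ * φ b x) := by group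
    have ey : φ b y = ψ b y * ((ψ b y)⁻¹ * φ b y) := by group
    simp only [MulEquiv.coe_toMonoidHom, map_commutatorElement]
    rw [ex, ey, comm_central _ _ _ _ hx hy]
  have hle : commutator X ≤ MonoidHom.eqLocus (φ b).toMonoidHom (ψ b).toMonoidHom := by
    rw [commutator_eq_closure, Subgroup.closure_le]
    rintro w ⟨x, y, rfl⟩
    exact hgen x y
  intro w hw
  exact hle hw
end
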